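/- For any integer partitions $\omega\subset\eta$ with $|\omega|=m<n=|\eta|$, the hypergeometric probabilities sum to one over an intermediate level: $\sum_{\lambda:\ |\lambda|=m}\mathcal H(\lambda\mid\eta) = 1$, where $\mathcal H(\lambda\mid\eta)=\binom{m}{\lambda}\dim(\lambda,\eta)/\binom{n}{\eta}$. -/

import Mathlib

open Finset

/-- Kingman-graph edge weight `χ(ω,η)`: for a covering pair, the increased part size is
the unique element of `η - ω`, and the weight is the number of parts of `η` of that size. -/
def chiW (ω η : Multiset ℕ) : ℕ := η.count ((η - ω).sum)

/-- The partitions covering `ω` (increase one part by `1`, or add a new part `1`). -/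
def upSet (ω : Multiset ℕ) : Finset (Multiset ℕ) :=
  insert (1 ::ₘ ω) (ω.toFinset.image (fun k => (k + 1) ::ₘ ω.erase k))

/-- The partitions covered by `η` (decrease one part by `1`, deleting it if it was `1`). -/
def downSet (η : Multiset ℕ) : Finset (Multiset ℕ) :=
  η.toFinset.image (fun k => if k = 1 then η.erase 1 else (k - 1) ::ₘ η.erase k)

/-- Total path weight from `ω` up to `η` in the Kingman graph, with fuel. -/
def kdimAux : ℕ → Multiset ℕ → Multiset ℕ → ℕ
  | 0, ω, η => if ω = η then 1 else 0
  | m + 1, ω, η => ∑ lam ∈ downSet η, chiW lam η * kdimAux m ω lam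

/-- `dim(ω, η)`: total path weight from `ω` to `η`. -/
def kdim (ω η : Multiset ℕ) : ℕ := kdimAux (η.sum - ω.sum) ω η

/-- Multinomial coefficient `(|η| choose η)` as a rational. -/
def multQ (η : Multiset ℕ) : ℚ := (Nat.factorial η.sum : ℚ) / ((η.map Nat.factorial).prod : ℕ)

/-- Multinomial coefficient as a real. -/
noncomputable def multR (η : Multiset ℕ) : ℝ := (Nat.factorial η.sum : ℝ) / ((η.map Nat.factorial).prod : ℕ)

/-- Young-diagram containment `ω ⊂ η` (componentwise on ranked parts, via conjugates). -/
def ydLE (ω η : Multiset ℕ) : Prop :=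
  ∀ k, Multiset.card (ω.filter (fun a => k ≤ a)) ≤ Multiset.card (η.filter (fun a => k ≤ a))

/-- Rising factorial `a (a+1) ⋯ (a+k-1)`. -/
noncomputable def riseF (a : ℝ) (k : ℕ) : ℝ := ∏ i ∈ Finset.range k, (a + i)

/-- Ewens–Pitman moment `m(η) = 𝔼_{α,θ}[ ̃P_η]` (the `θ`-factor cancelled form of
`∏_{l=0}^{d-1}(θ+lα)/(θ)_{(n)} ∏ (1-α)_{(η_i-1)}`). -/
noncomputable def EPM (α θ : ℝ) (η : Multiset ℕ) : ℝ :=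
  (∏ l ∈ Finset.Ico 1 (Multiset.card η), (θ + l * α)) /
      (∏ i ∈ Finset.Ico 1 η.sum, (θ + i)) *
    (η.map (fun p => riseF (1 - α) (p - 1))).prod

/-- `a₁(η)! ⋯ a_n(η)!`. -/
def aprod (η : Multiset ℕ) : ℕ := ∏ k ∈ Finset.Icc 1 η.sum, Nat.factorial (η.count k)

/-- Chinese-restaurant edge weight `χ_B(ω,η)`. -/
def chiB (ω η : Multiset ℕ) : ℕ :=
  if (η - ω).sum = 1 then 1 else ω.count ((η - ω).sum - 1)

/-- Augmented monomial symmetric function as a real-valued function. -/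
noncomputable def tildePR (N : ℕ) (η : List ℕ) (x : Fin N → ℝ) : ℝ :=
  ∑ f ∈ (Finset.univ : Finset (Fin η.length → Fin N)).filter Function.Injective,
    ∏ j, x (f j) ^ η.get j

/-- Monomial symmetric function: sum over distinct rearrangements of `η`. -/
noncomputable def monoP (N : ℕ) (η : Multiset ℕ) (x : Fin N → ℝ) : ℝ :=
  ∑ v ∈ (Finset.univ : Finset (Fin N → Fin (η.sum + 1))).filter
      (fun v => Multiset.filter (fun a => 0 < a)
        (Multiset.map (fun i => ((v i : ℕ))) (Finset.univ : Finset (Fin N)).val) = η),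
    ∏ i, x i ^ ((v i : ℕ))

/-- `\vec P_η(x) = (n choose η) P_η(x)`. -/
noncomputable def vecP (N : ℕ) (η : Multiset ℕ) (x : Fin N → ℝ) : ℝ :=
  (Nat.factorial η.sum : ℝ) / ((η.map Nat.factorial).prod : ℕ) * monoP N η x

/-- Augmented monomial symmetric polynomial. -/
noncomputable def tildePoly (N : ℕ) (η : List ℕ) : MvPolynomial (Fin N) ℝ :=
  ∑ f ∈ (Finset.univ : Finset (Fin η.length → Fin N)).filter Function.Injective,
    ∏ j, (MvPolynomial.X (f j)) ^ η.get j

/-- The operator `𝓛_{α,θ}` on polynomials. -/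
noncomputable def Lop (α θ : ℝ) {N : ℕ} (p : MvPolynomial (Fin N) ℝ) :
    MvPolynomial (Fin N) ℝ :=
  MvPolynomial.C (1 / 2 : ℝ) *
      (∑ i, ∑ j, MvPolynomial.X i * ((if i = j then 1 else 0) - MvPolynomial.X j) *
        MvPolynomial.pderiv i (MvPolynomial.pderiv j p)) -
    MvPolynomial.C (1 / 2 : ℝ) *
      (∑ i, (MvPolynomial.C θ * MvPolynomial.X i + MvPolynomial.C α) * MvPolynomial.pderiv i p)

/-- The ideal generated by `∑ xᵢ - 1` (identities on the simplex). -/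
noncomputable def simplexIdeal (N : ℕ) : Ideal (MvPolynomial (Fin N) ℝ) :=
  Ideal.span {(∑ i, MvPolynomial.X i) - 1}

namespace HypAux

/-- The down map: decrease a part `k` by one. -/
def dmap (η : Multiset ℕ) (k : ℕ) : Multiset ℕ :=
  if k = 1 then η.erase 1 else (k - 1) ::ₘ η.erase k

lemma sub_dmap (η : Multiset ℕ) (k : ℕ) (hk : k ∈ η) (hk1 : 0 < k) :
    η - dmap η k = {k} := by
  obtain ⟨t, rfl⟩ : ∃ t, η = k ::ₘ t := ⟨η.erase k, (Multiset.cons_erase hk).symm⟩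
  unfold dmap
  split_ifs with h
  · subst h
    rw [Multiset.erase_cons_head, ← Multiset.singleton_add, add_tsub_cancel_right]
  · rw [Multiset.erase_cons_head, ← Multiset.singleton_add, ← Multiset.singleton_add,
      tsub_add_eq_tsub_tsub_swap, add_tsub_cancel_right, Multiset.sub_singleton,
      Multiset.erase_of_notMem (by simp only [Multiset.mem_singleton]; omega)]

lemma chiW_dmap (η : Multiset ℕ) (k : ℕ) (hk : k ∈ η) (hk1 : 0 < k) :
    chiW (dmap η k) η = η.count k := by
  rw [chiW, sub_dmap η k hk hk1, Multiset.sum_singleton]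

lemma dmap_sum (η : Multiset ℕ) (k : ℕ) (hk : k ∈ η) (hk1 : 0 < k) :
    (dmap η k).sum = η.sum - 1 := by
  have hs : η.sum = k + (η.erase k).sum := by
    conv_lhs => rw [← Multiset.cons_erase hk]
    rw [Multiset.sum_cons]
  unfold dmap
  split_ifs with h
  · subst h; omega
  · rw [Multiset.sum_cons]; omega

lemma dmap_pos (η : Multiset ℕ) (hpos : ∀ a ∈ η, 0 < a) (k : ℕ) (hk : k ∈ η) :
    ∀ a ∈ dmap η k, 0 < a := by
  intro a ha
  unfold dmap at ha
  split_ifs at ha with h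
  · exact hpos a (Multiset.mem_of_mem_erase ha)
  · have hk1 : 0 < k := hpos k hk
    rcases Multiset.mem_cons.mp ha with h1 | h1
    · omega
    · exact hpos a (Multiset.mem_of_mem_erase h1)

lemma dmap_injOn (η : Multiset ℕ) (hpos : ∀ a ∈ η, 0 < a) :
    ∀ k ∈ η.toFinset, ∀ k' ∈ η.toFinset, dmap η k = dmap η k' → k = k' := by
  intro k hk k' hk' h
  rw [Multiset.mem_toFinset] at hk hk'
  have h1 := sub_dmap η k hk (hpos k hk)
  have h2 := sub_dmap η k' hk' (hpos k' hk')
  rw [h] at h1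
  rw [h1] at h2
  have := Multiset.singleton_inj.mp h2
  omega

lemma factprod_pos (η : Multiset ℕ) : 0 < ((η.map Nat.factorial).prod : ℚ) := by
  have : 0 < (η.map Nat.factorial).prod := by
    apply Multiset.prod_pos
    intro a ha
    rcases Multiset.mem_map.mp ha with ⟨b, _, rfl⟩
    exact Nat.factorial_pos b
  exact_mod_cast this

lemma multQ_pos (η : Multiset ℕ) : 0 < multQ η := by
  unfold multQ
  exact div_pos (by exact_mod_cast Nat.factorial_pos _) (factprod_pos η)

lemma factprod_dmap (η : Multiset ℕ) (k : ℕ) (hk : k ∈ η) (hk1 : 0 < k) :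
    (((dmap η k).map Nat.factorial).prod : ℚ) * k = ((η.map Nat.factorial).prod : ℚ) := by
  have hP : ((η.map Nat.factorial).prod : ℚ)
      = (Nat.factorial k : ℚ) * (((η.erase k).map Nat.factorial).prod : ℚ) := by
    conv_lhs => rw [← Multiset.cons_erase hk]
    rw [Multiset.map_cons, Multiset.prod_cons]
    push_cast
    ring
  unfold dmap
  split_ifs with h
  · subst h
    rw [hP]
    simp [Nat.factorial]
  · rw [Multiset.map_cons, Multiset.prod_cons, hP, ← Nat.mul_factorial_pred hk1.ne']
    push_cast
    ring

lemma step (η : Multiset ℕ) (hpos : ∀ a ∈ η, 0 < a) (hne : η ≠ 0) :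
    ∑ μ ∈ downSet η, (chiW μ η : ℚ) * multQ μ = multQ η := by
  have hd : downSet η = η.toFinset.image (dmap η) := rfl
  rw [hd, Finset.sum_image (dmap_injOn η hpos)]
  have key : ∀ k ∈ η.toFinset, (chiW (dmap η k) η : ℚ) * multQ (dmap η k)
      = ((η.count k * k : ℕ) : ℚ) *
        ((Nat.factorial (η.sum - 1) : ℚ) / ((η.map Nat.factorial).prod : ℕ)) := by
    intro k hk
    rw [Multiset.mem_toFinset] at hk
    have hk1 : 0 < k := hpos k hk
    rw [chiW_dmap η k hk hk1]
    unfold multQ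
    rw [dmap_sum η k hk hk1, ← factprod_dmap η k hk hk1, Nat.cast_mul]
    have hQpos : (((dmap η k).map Nat.factorial).prod : ℚ) ≠ 0 :=
      ne_of_gt (factprod_pos (dmap η k))
    have hkQ : (k : ℚ) ≠ 0 := by positivity
    push_cast at hQpos ⊢
    field_simp
  rw [Finset.sum_congr rfl key, ← Finset.sum_mul]
  have hsum : ∑ k ∈ η.toFinset, ((η.count k * k : ℕ) : ℚ) = (η.sum : ℚ) := by
    rw [← Nat.cast_sum]
    congr 1
    have := Finset.sum_multiset_map_count η (id : ℕ → ℕ)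
    simp only [smul_eq_mul, id] at this
    rw [Multiset.map_id'] at this
    exact this.symm
  rw [hsum]
  unfold multQ
  have h0 : 0 < η.sum := by
    rcases Multiset.exists_mem_of_ne_zero hne with ⟨a, ha⟩
    have := hpos a ha
    have := Multiset.single_le_sum (fun x _ => Nat.zero_le x) a ha
    omega
  rw [← Nat.mul_factorial_pred h0.ne']
  push_cast
  ring

lemma downSet_mem_sum (η : Multiset ℕ) (hpos : ∀ a ∈ η, 0 < a) (μ : Multiset ℕ)
    (hμ : μ ∈ downSet η) : μ.sum = η.sum - 1 ∧ ∀ a ∈ μ, 0 < a := by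
  rcases Finset.mem_image.mp hμ with ⟨k, hk, rfl⟩
  rw [Multiset.mem_toFinset] at hk
  exact ⟨dmap_sum η k hk (hpos k hk), dmap_pos η hpos k hk⟩

lemma main (m : ℕ) : ∀ (k : ℕ) (η : Multiset ℕ), (∀ a ∈ η, 0 < a) → η.sum = m + k →
    ∑ lam : Nat.Partition m, multQ lam.parts * (kdimAux k lam.parts η : ℚ) = multQ η := by
  intro k
  induction k with
  | zero =>
    intro η hpos hsum
    simp only [Nat.add_zero] at hsum
    simp only [kdimAux]
    rw [Finset.sum_eq_single (⟨η, fun {i} hi => hpos i hi, hsum⟩ : Nat.Partition m)]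
    · simp
    · intro b _ hb
      have hb' : b.parts ≠ η := fun h => hb (Nat.Partition.ext h)
      simp [hb']
    · intro h
      exact absurd (Finset.mem_univ _) h
  | succ k ih =>
    intro η hpos hsum
    have hne : η ≠ 0 := by
      intro h
      rw [h] at hsum
      simp at hsum
    simp only [kdimAux]
    have : ∀ lam : Nat.Partition m,
        multQ lam.parts * ((∑ μ ∈ downSet η, chiW μ η * kdimAux k lam.parts μ : ℕ) : ℚ)
        = ∑ μ ∈ downSet η, (chiW μ η : ℚ) *
            (multQ lam.parts * (kdimAux k lam.parts μ : ℚ)) := by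
      intro lam
      push_cast
      rw [Finset.mul_sum]
      exact Finset.sum_congr rfl (fun μ _ => by ring)
    rw [Finset.sum_congr rfl (fun lam _ => this lam), Finset.sum_comm]
    have hinner : ∀ μ ∈ downSet η,
        ∑ lam : Nat.Partition m, (chiW μ η : ℚ) *
            (multQ lam.parts * (kdimAux k lam.parts μ : ℚ))
        = (chiW μ η : ℚ) * multQ μ := by
      intro μ hμ
      rw [← Finset.mul_sum]
      congr 1
      obtain ⟨hs, hp⟩ := downSet_mem_sum η hpos μ hμ
      exact ih μ hp (by omega)
    rw [Finset.sum_congr rfl hinner]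
    exact step η hpos hne

end HypAux

/-- The hypergeometric probabilities `𝓗(λ|η) = (m choose λ) dim(λ,η) / (n choose η)`
sum to one over the partitions `λ` of `m`. -/
theorem hypergeometric_sum_one (m n : ℕ) (hmn : m < n) (η : Multiset ℕ)
    (hpos : ∀ a ∈ η, 0 < a) (hsum : η.sum = n) :
    ∑ lam : Nat.Partition m, multQ lam.parts * (kdim lam.parts η : ℚ) / multQ η = 1 := by
  have hk : η.sum = m + (n - m) := by omega
  have hmain := HypAux.main m (n - m) η hpos hk
  have hkdim : ∀ lam : Nat.Partition m, kdim lam.parts η = kdimAux (n - m) lam.parts η := by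
    intro lam
    rw [kdim, lam.parts_sum, hsum]
  rw [Finset.sum_congr rfl (fun lam _ => by rw [hkdim lam, div_eq_mul_inv]),
    ← Finset.sum_mul, hmain, ← div_eq_mul_inv, div_self]
  exact ne_of_gt (HypAux.multQ_pos η)
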